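/- Let R be a Dedekind domain, M a finitely generated torsion-free R-module of rank r ≥ 1, and N a finitely generated torsion-free R-module of rank s ≥ 1 with r ≥ 1 + s. If, writing M ≅ R^{r-1} ⊕ I and N ≅ R^{s-1} ⊕ J for nonzero ideals I, J, there exists a nonzero ideal K with I ≅ KJ, then there is a surjective R-linear map from M onto N. -/

import Mathlib

open UniqueFactorizationMonoid

theorem key {R : Type*} [CommRing R] [IsDomain R] [IsDedekindDomain R]
    (K J : Ideal R) (hK : K ≠ ⊥) (hJ : J ≠ ⊥) :
    ∃ b ∈ J, K * J ⊔ Ideal.span {b} = J := by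
  classical
  have hKJ : K * J ≠ 0 := mul_ne_zero hK hJ
  set s : Finset (Ideal R) := (normalizedFactors (K * J)).toFinset with hs
  set c : Ideal R → ℕ := fun p => (normalizedFactors J).count p with hc
  have prime : ∀ p ∈ s, Prime p := fun p hp =>
    prime_of_normalized_factor p (Multiset.mem_toFinset.mp hp)
  have hbp : ∀ p ∈ s, ∃ x, x ∈ p ^ c p ∧ x ∉ p ^ (c p + 1) := by
    intro p hp
    have hp' := prime p hp
    obtain ⟨x, hx1, hx2⟩ := Ideal.exists_mem_pow_notMem_pow_succ p hp'.ne_zero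
      (fun h => hp'.not_isUnit (by simp [Ideal.isUnit_iff, h])) (c p)
    exact ⟨x, hx1, hx2⟩
  choose bp hbp1 hbp2 using hbp
  obtain ⟨b, hb⟩ := IsDedekindDomain.exists_forall_sub_mem_ideal (s := s) id (fun p => c p + 1)
    prime (fun i _ j _ h => h) (fun p => bp p p.2)
  have hmem : ∀ p ∈ s, b ∈ p ^ c p := by
    intro p hp
    have h2 : b - bp p hp ∈ p ^ c p :=
      Ideal.pow_le_pow_right (Nat.le_succ _) (hb p hp)
    have := (p ^ c p).add_mem h2 (hbp1 p hp)
    simpa using this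
  have hnmem : ∀ p ∈ s, b ∉ p ^ (c p + 1) := by
    intro p hp hbmem
    exact hbp2 p hp (by simpa using (p ^ (c p + 1)).sub_mem hbmem (hb p hp))
  -- membership of normalized factors of J in s
  have hsub : ∀ q ∈ (normalizedFactors J).toFinset, q ∈ s := by
    intro q hq
    rw [Multiset.mem_toFinset] at hq
    rw [hs, Multiset.mem_toFinset, mem_normalizedFactors_iff hKJ]
    exact ⟨prime_of_normalized_factor q hq,
      (dvd_of_mem_normalizedFactors hq).trans (dvd_mul_left J K)⟩
  -- b ∈ J
  have hJfac : ∏ q ∈ (normalizedFactors J).toFinset, q ^ c q = J := by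
    rw [← Finset.prod_multiset_count]
    exact associated_iff_eq.mp (prod_normalizedFactors hJ)
  have hbJ : b ∈ J := by
    have : J ∣ Ideal.span {b} := by
      rw [← hJfac]
      apply Finset.prod_dvd_of_coprime
      · intro q hq q' hq' hne
        have hq1 := prime _ (hsub q hq)
        have hq2 := prime _ (hsub q' hq')
        have hcop : q ⊔ q' = ⊤ :=
          Ideal.IsMaximal.coprime_of_ne
            ((Ideal.isPrime_of_prime hq1).isMaximal hq1.ne_zero)
            ((Ideal.isPrime_of_prime hq2).isMaximal hq2.ne_zero) hne
        exact ((Ideal.isCoprime_iff_sup_eq.mpr hcop).pow)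
      · intro q hq
        exact Ideal.dvd_span_singleton.mpr (hmem q (hsub q hq))
    exact (Ideal.span_singleton_le_iff_mem J).mp (Ideal.le_of_dvd this)
  refine ⟨b, hbJ, ?_⟩
  -- write (b) = J * C
  obtain ⟨C, hC⟩ : J ∣ Ideal.span {b} := Ideal.dvd_span_singleton.mpr hbJ
  have hgcd1 : gcd K C = 1 := by
    by_contra hne
    have hgne : gcd K C ≠ 0 := fun h => hK ((gcd_eq_zero_iff _ _).mp h).1
    have hgnu : ¬IsUnit (gcd K C) := by
      rw [Ideal.isUnit_iff, ← Ideal.one_eq_top]; exact hne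
    obtain ⟨p, hpf⟩ := UniqueFactorizationMonoid.exists_mem_factors hgne hgnu
    have hp : Prime p := UniqueFactorizationMonoid.prime_of_factor p hpf
    have hpdvd : p ∣ gcd K C := UniqueFactorizationMonoid.dvd_of_mem_factors hpf
    have hpK : p ∣ K := hpdvd.trans (gcd_dvd_left K C)
    have hpC : p ∣ C := hpdvd.trans (gcd_dvd_right K C)
    have hps : p ∈ s := by
      rw [hs, Multiset.mem_toFinset, mem_normalizedFactors_iff hKJ]
      exact ⟨hp, hpK.trans (dvd_mul_right K J)⟩
    apply hnmem p hps
    have h1 : p ^ c p ∣ J := by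
      have : Multiset.replicate (c p) p ≤ normalizedFactors J :=
        Multiset.le_count_iff_replicate_le.mp le_rfl
      calc p ^ c p = (Multiset.replicate (c p) p).prod := by simp
        _ ∣ (normalizedFactors J).prod := Multiset.prod_dvd_prod_of_le this
        _ = J := associated_iff_eq.mp (prod_normalizedFactors hJ)
    have h2 : p ^ (c p + 1) ∣ Ideal.span {b} := by
      rw [hC, pow_succ]
      exact mul_dvd_mul h1 hpC
    exact Ideal.dvd_span_singleton.mp h2 -- membership direction
  calc K * J ⊔ Ideal.span {b} = gcd (K * J) (Ideal.span {b}) := (Ideal.gcd_eq_sup _ _).symm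
    _ = gcd (J * K) (J * C) := by rw [hC, mul_comm K J]
    _ = normalize J * gcd K C := gcd_mul_left J K C
    _ = J := by rw [hgcd1, mul_one]; exact normalize_eq J

theorem key2 {R : Type*} [CommRing R] [IsDomain R] [IsDedekindDomain R]
    (K J : Ideal R) (hK : K ≠ ⊥) (hJ : J ≠ ⊥) :
    ∃ g : (R × ↥(K * J)) →ₗ[R] ↥J, Function.Surjective g := by
  obtain ⟨b, hbJ, hsup⟩ := key K J hK hJ
  have hle : K * J ≤ J := Ideal.mul_le_right
  refine ⟨(LinearMap.toSpanSingleton R ↥J ⟨b, hbJ⟩).comp (LinearMap.fst R R ↥(K * J))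
    + (Submodule.inclusion hle).comp (LinearMap.snd R R ↥(K * J)), ?_⟩
  rintro ⟨z, hz⟩
  rw [← hsup] at hz
  obtain ⟨u, hu, v, hv, huv⟩ := Submodule.mem_sup.mp hz
  obtain ⟨x, rfl⟩ := Ideal.mem_span_singleton'.mp hv
  refine ⟨(x, ⟨u, hu⟩), Subtype.ext ?_⟩
  simp [LinearMap.toSpanSingleton, Submodule.inclusion, smul_eq_mul]
  rw [← huv]; ring


/-- Let `R` be a Dedekind domain, `M ≅ R^(r-1) ⊕ I` a finitely generated torsion-free
`R`-module of rank `r ≥ 1`, and `N ≅ R^(s-1) ⊕ J` a finitely generated torsion-free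
`R`-module of rank `s ≥ 1`, where `I` and `J` are nonzero ideals and `r ≥ 1 + s`.  If
there is a nonzero ideal `K` with `I ≅ KJ`, then there is a surjective `R`-linear map
from `M` onto `N`. -/
theorem stmt_17 {R M N : Type*} [CommRing R] [IsDomain R] [IsDedekindDomain R]
    [AddCommGroup M] [Module R M] [Module.Finite R M]
    [AddCommGroup N] [Module R N] [Module.Finite R N]
    (r s : ℕ) (hs : 1 ≤ s) (hr : 1 + s ≤ r)
    (I J K : Ideal R) (hI : I ≠ ⊥) (hJ : J ≠ ⊥) (hK : K ≠ ⊥)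
    (eM : M ≃ₗ[R] ((Fin (r - 1) → R) × ↥I))
    (eN : N ≃ₗ[R] ((Fin (s - 1) → R) × ↥J))
    (eIK : ↥I ≃ₗ[R] ↥(K * J)) :
    ∃ f : M →ₗ[R] N, Function.Surjective f := by
  obtain ⟨g, hg⟩ := key2 K J hK hJ
  have hle : s - 1 ≤ r - 1 := by omega
  have hi0 : s - 1 < r - 1 := by omega
  let i0 : Fin (r - 1) := ⟨s - 1, hi0⟩
  let F : ((Fin (r - 1) → R) × ↥I) →ₗ[R] ((Fin (s - 1) → R) × ↥J) :=
    LinearMap.prod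
      ((LinearMap.funLeft R R (Fin.castLE hle)).comp (LinearMap.fst R _ _))
      (g.comp (LinearMap.prod
        ((LinearMap.proj i0).comp (LinearMap.fst R _ _))
        (eIK.toLinearMap.comp (LinearMap.snd R _ _))))
  have hF : Function.Surjective F := by
    rintro ⟨w, j⟩
    obtain ⟨⟨a, y⟩, hay⟩ := hg j
    classical
    refine ⟨(fun m => if h : (m : ℕ) < s - 1 then w ⟨m, h⟩ else
      if (m : ℕ) = s - 1 then a else 0, eIK.symm y), ?_⟩
    refine Prod.ext ?_ ?_
    · funext k
      simp only [F, LinearMap.prod_apply, LinearMap.comp_apply, LinearMap.fst_apply,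
        LinearMap.funLeft_apply, Function.prod_apply]
      rw [dif_pos (show ((Fin.castLE hle k : Fin (r - 1)) : ℕ) < s - 1 from by simpa using k.2)]
      exact congrArg w (Fin.ext rfl)
    · simp only [F, LinearMap.prod_apply, LinearMap.comp_apply, LinearMap.fst_apply,
        LinearMap.snd_apply, LinearMap.proj_apply, Function.prod_apply, LinearEquiv.coe_coe,
        LinearEquiv.apply_symm_apply]
      rw [dif_neg (show ¬((i0 : Fin (r - 1)) : ℕ) < s - 1 from by simp [i0])]
      simpa [i0] using hay
  refine ⟨(eN.symm.toLinearMap.comp F).comp eM.toLinearMap, ?_⟩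
  simp only [LinearMap.coe_comp, LinearEquiv.coe_coe]
  exact eN.symm.surjective.comp (hF.comp eM.surjective)
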